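/- Let k ≥ 1 and let Γ be a 4k × 3 tableau with entries in {1,…,6}, strictly increasing rows, non-decreasing columns, no row containing both t and 7−t for any t, and each value 1,…,6 appearing exactly 2k times. Then row 1 of Γ is one of (1,2,3), (1,2,4), (1,3,5). -/

import Mathlib

/-- For a `4k × 3` tableau with entries in `{1,…,6}`, strictly increasing rows,
non-decreasing columns, no row containing both `t` and `7 - t`, and each value
appearing exactly `2k` times: the first row is one of `(1,2,3)`, `(1,2,4)`,
`(1,3,5)`. -/
theorem spin7_P3_first_row (k : ℕ) (hk : 1 ≤ k) (Γ : Fin (4 * k) → Fin 3 → ℕ)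
    (hval : ∀ i j, 1 ≤ Γ i j ∧ Γ i j ≤ 6)
    (hrow : ∀ i, ∀ j j' : Fin 3, j < j' → Γ i j < Γ i j')
    (hcol : ∀ i i' : Fin (4 * k), i ≤ i' → ∀ j, Γ i j ≤ Γ i' j)
    (hno : ∀ i, ∀ t : ℕ, 1 ≤ t → t ≤ 6 → ∀ j j' : Fin 3, Γ i j = t → Γ i j' ≠ 7 - t)
    (hcount : ∀ t : ℕ, 1 ≤ t → t ≤ 6 →
      (Finset.univ.filter fun p : Fin (4 * k) × Fin 3 => Γ p.1 p.2 = t).card = 2 * k) :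
    (Γ ⟨0, by omega⟩ 0, Γ ⟨0, by omega⟩ 1, Γ ⟨0, by omega⟩ 2) ∈
      ({(1,2,3), (1,2,4), (1,3,5)} : Set (ℕ × ℕ × ℕ)) := by
  set z : Fin (4 * k) := ⟨0, by omega⟩ with hz
  have hzle : ∀ i : Fin (4 * k), z ≤ i := by
    intro i; simp [Fin.le_def, hz]
  -- Step 1: Γ z 0 = 1
  have ha : Γ z 0 = 1 := by
    have h1 := hcount 1 (le_refl 1) (by norm_num)
    have hne : (Finset.univ.filter fun p : Fin (4 * k) × Fin 3 => Γ p.1 p.2 = 1).Nonempty := by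
      apply Finset.card_pos.mp; rw [h1]; omega
    obtain ⟨⟨i, j⟩, hp⟩ := hne
    simp only [Finset.mem_filter, Finset.mem_univ, true_and] at hp
    have hle : Γ i 0 ≤ 1 := by
      fin_cases j
      · exact le_of_eq hp
      · have h2 : Γ i 1 = 1 := hp
        have := hrow i 0 1 (by decide); omega
      · have h2 : Γ i 2 = 1 := hp
        have := hrow i 0 2 (by decide); omega
    have h0 := hcol z i (hzle i) 0
    have := (hval z 0).1
    omega
  -- Step 2: Γ z 1 < 4
  have hb4 : Γ z 1 < 4 := by
    by_contra hb
    push_neg at hb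
    have hcol1 : ∀ i, 4 ≤ Γ i 1 := fun i => le_trans hb (hcol z i (hzle i) 1)
    have hcol2 : ∀ i, 5 ≤ Γ i 2 := fun i => lt_of_le_of_lt (hcol1 i) (hrow i 1 2 (by decide))
    set C : Finset (Fin (4 * k) × Fin 3) :=
      Finset.univ.filter (fun p => p.2 = 0) with hCdef
    have hC : C.card = 4 * k := by
      have hmap : C = (Finset.univ : Finset (Fin (4 * k))).map
          ⟨fun i => (i, (0 : Fin 3)), by intro a b h; exact (Prod.mk.injEq _ _ _ _).mp h |>.1⟩ := by
        ext ⟨i, j⟩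
        simp [hCdef, Prod.ext_iff, eq_comm]
        exact ⟨fun h => ⟨i, rfl, h⟩, fun ⟨_, _, h2⟩ => h2⟩
      rw [hmap, Finset.card_map, Finset.card_univ, Fintype.card_fin]
    set S : ℕ → Finset (Fin (4 * k) × Fin 3) :=
      fun t => Finset.univ.filter (fun p => Γ p.1 p.2 = t) with hSdef
    have hsub : ∀ t, t ≤ 3 → S t ⊆ C := by
      intro t ht p hp
      simp only [hSdef, Finset.mem_filter, Finset.mem_univ, true_and] at hp
      simp only [hCdef, Finset.mem_filter, Finset.mem_univ, true_and]
      obtain ⟨i, j⟩ := p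
      fin_cases j
      · rfl
      · exfalso; have h2 : Γ i 1 = t := hp
        have := hcol1 i; omega
      · exfalso; have h2 : Γ i 2 = t := hp
        have := hcol2 i; omega
    have hdisj : ∀ s t : ℕ, s ≠ t → Disjoint (S s) (S t) := by
      intro s t hst
      rw [Finset.disjoint_left]
      intro p h1 h2
      simp only [hSdef, Finset.mem_filter, Finset.mem_univ, true_and] at h1 h2
      omega
    have hunion : (S 1 ∪ S 2 ∪ S 3).card = 6 * k := by
      rw [Finset.card_union_of_disjoint
          (Finset.disjoint_union_left.mpr ⟨hdisj 1 3 (by norm_num), hdisj 2 3 (by norm_num)⟩),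
        Finset.card_union_of_disjoint (hdisj 1 2 (by norm_num))]
      have e1 := hcount 1 (by norm_num) (by norm_num)
      have e2 := hcount 2 (by norm_num) (by norm_num)
      have e3 := hcount 3 (by norm_num) (by norm_num)
      simp only [hSdef]
      omega
    have hle : (S 1 ∪ S 2 ∪ S 3).card ≤ C.card :=
      Finset.card_le_card (Finset.union_subset
        (Finset.union_subset (hsub 1 (by norm_num)) (hsub 2 (by norm_num)))
        (hsub 3 (by norm_num)))
    omega
  -- Step 3: finish by case analysis
  have hab : Γ z 0 < Γ z 1 := hrow z 0 1 (by decide)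
  have hbc : Γ z 1 < Γ z 2 := hrow z 1 2 (by decide)
  have hc6 : Γ z 2 ≤ 6 := (hval z 2).2
  have hcne6 : Γ z 2 ≠ 6 := by
    have := hno z 1 (by norm_num) (by norm_num) 0 2 ha
    simpa using this
  have hb23 : Γ z 1 = 2 ∨ Γ z 1 = 3 := by omega
  simp only [Set.mem_insert_iff, Set.mem_singleton_iff, Prod.mk.injEq]
  rcases hb23 with hb | hb
  · have hcne5 : Γ z 2 ≠ 5 := by
      have := hno z 2 (by norm_num) (by norm_num) 1 2 hb
      simpa using this
    omega
  · have hcne4 : Γ z 2 ≠ 4 := by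
      have := hno z 3 (by norm_num) (by norm_num) 1 2 hb
      simpa using this
    omega
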